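/- Decay lemma for the strongly convex rate (the induction argument used in all strongly convex convergence proofs of Sections C–F). Let γ ≥ 3 be a real number, C₁ ≥ 0 and C₂ ≥ 0 real constants, and let Δ : ℕ → ℝ satisfy Δ_t ≥ 0 for all t and Δ_{t+1} ≤ (1 − 2/(γ + t))·Δ_t + C₁/(γ + t)² + C₂/(γ + t)³ for every t ≥ 0. Then for every t ≥ 0, Δ_t ≤ v/(γ + t), where v = max{C₁ + C₂/(γ + 1), (γ + 1)·Δ₀}. -/

import Mathlib

lemma step_aux (a γ v C₁ C₂ : ℝ) (hγ : 3 ≤ γ) (haγ : γ + 1 ≤ a)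
    (hC₁ : 0 ≤ C₁) (hC₂ : 0 ≤ C₂) (hv0 : 0 ≤ v)
    (hkey : C₁ * (γ + 1) + C₂ ≤ v * (γ + 1)) :
    (1 - 2 / a) * (v / a) + C₁ / a ^ 2 + C₂ / a ^ 3 ≤ v / (a + 1) := by
  have ha : (4:ℝ) ≤ a := by linarith
  have ha0 : (0:ℝ) < a := by linarith
  have ha1 : (0:ℝ) < a + 1 := by linarith
  have hγ1 : (0:ℝ) < γ + 1 := by linarith
  rw [← sub_nonneg]
  have hid : v / (a + 1) - ((1 - 2 / a) * (v / a) + C₁ / a ^ 2 + C₂ / a ^ 3)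
      = (v * a * (a + 2) - (C₁ * a + C₂) * (a + 1)) / (a ^ 3 * (a + 1)) := by
    field_simp
    ring
  rw [hid]
  apply div_nonneg _ (by positivity)
  nlinarith [mul_nonneg (sub_nonneg.mpr hkey) (mul_nonneg ha0.le (by linarith : (0:ℝ) ≤ a + 2)),
    mul_nonneg (mul_nonneg hC₁ hγ1.le) ha0.le,
    mul_nonneg hC₂ (by nlinarith : (0:ℝ) ≤ (a + 1) * (a - γ) - 1)]

lemma base_aux (γ v C₁ C₂ : ℝ) (hγ : 3 ≤ γ)
    (hC₁ : 0 ≤ C₁) (hC₂ : 0 ≤ C₂) (hv0 : 0 ≤ v)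
    (hkey : C₁ * (γ + 1) + C₂ ≤ v * (γ + 1)) :
    (1 - 2 / γ) * (v / (γ + 1)) + C₁ / γ ^ 2 + C₂ / γ ^ 3 ≤ v / (γ + 1) := by
  have hγ0 : (0:ℝ) < γ := by linarith
  have hγ1 : (0:ℝ) < γ + 1 := by linarith
  rw [← sub_nonneg]
  have hid : v / (γ + 1) - ((1 - 2 / γ) * (v / (γ + 1)) + C₁ / γ ^ 2 + C₂ / γ ^ 3)
      = (2 * γ ^ 2 * v * (γ + 1) - (C₁ * γ + C₂) * (γ + 1) ^ 2) / (γ ^ 3 * (γ + 1) ^ 2) := by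
    field_simp
    ring
  rw [hid]
  apply div_nonneg _ (by positivity)
  nlinarith [mul_nonneg (sub_nonneg.mpr hkey) (by positivity : (0:ℝ) ≤ 2 * γ ^ 2),
    mul_nonneg (mul_nonneg hC₁ hγ0.le) (by nlinarith : (0:ℝ) ≤ (γ + 1) * (γ - 1)),
    mul_nonneg hC₂ (by nlinarith : (0:ℝ) ≤ 2 * γ ^ 2 - (γ + 1) ^ 2)]

/-- Decay lemma for the strongly convex rate. -/
theorem stmt_15 (γ : ℝ) (hγ : 3 ≤ γ) (C₁ C₂ : ℝ) (hC₁ : 0 ≤ C₁) (hC₂ : 0 ≤ C₂)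
    (Δ : ℕ → ℝ) (hΔ : ∀ t, 0 ≤ Δ t)
    (hrec : ∀ t : ℕ,
      Δ (t + 1) ≤ (1 - 2 / (γ + t)) * Δ t + C₁ / (γ + t) ^ 2 + C₂ / (γ + t) ^ 3) :
    ∀ t : ℕ, Δ t ≤ max (C₁ + C₂ / (γ + 1)) ((γ + 1) * Δ 0) / (γ + t) := by
  set v := max (C₁ + C₂ / (γ + 1)) ((γ + 1) * Δ 0) with hvdef
  have hγ1 : (0:ℝ) < γ + 1 := by linarith
  have hγ0 : (0:ℝ) < γ := by linarith
  have hv0 : 0 ≤ v := le_trans (mul_nonneg hγ1.le (hΔ 0)) (le_max_right _ _)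
  have hv1 : C₁ + C₂ / (γ + 1) ≤ v := le_max_left _ _
  have hkey : C₁ * (γ + 1) + C₂ ≤ v * (γ + 1) := by
    have h := (div_le_iff₀ hγ1).mp (by linarith : C₂ / (γ + 1) ≤ v - C₁)
    nlinarith
  have h0 : Δ 0 ≤ v / (γ + 1) := by
    rw [le_div_iff₀ hγ1]
    have := le_max_right (C₁ + C₂ / (γ + 1)) ((γ + 1) * Δ 0)
    linarith
  have key : ∀ t : ℕ, 1 ≤ t → Δ t ≤ v / (γ + t) := by
    intro t ht
    induction t, ht using Nat.le_induction with
    | base =>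
      have h1 := hrec 0
      push_cast at h1 ⊢
      rw [add_zero] at h1
      have hcoef : (0:ℝ) ≤ 1 - 2 / γ := by
        rw [sub_nonneg, div_le_one hγ0]; linarith
      calc Δ 1 ≤ (1 - 2 / γ) * Δ 0 + C₁ / γ ^ 2 + C₂ / γ ^ 3 := h1
        _ ≤ (1 - 2 / γ) * (v / (γ + 1)) + C₁ / γ ^ 2 + C₂ / γ ^ 3 :=
            add_le_add (add_le_add_left (mul_le_mul_of_nonneg_left h0 hcoef) _) le_rfl
        _ ≤ v / (γ + 1) := base_aux γ v C₁ C₂ hγ hC₁ hC₂ hv0 hkey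
    | succ t ht ih =>
      have ha : γ + 1 ≤ γ + t := by
        have : (1:ℝ) ≤ t := by exact_mod_cast ht
        linarith
      have ha0 : (0:ℝ) < γ + t := by linarith
      have hcoef : (0:ℝ) ≤ 1 - 2 / (γ + t) := by
        rw [sub_nonneg, div_le_one ha0]; linarith
      calc Δ (t + 1) ≤ (1 - 2 / (γ + t)) * Δ t + C₁ / (γ + t) ^ 2 + C₂ / (γ + t) ^ 3 :=
            hrec t
        _ ≤ (1 - 2 / (γ + t)) * (v / (γ + t)) + C₁ / (γ + t) ^ 2 + C₂ / (γ + t) ^ 3 :=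
            add_le_add (add_le_add_left (mul_le_mul_of_nonneg_left ih hcoef) _) le_rfl
        _ ≤ v / ((γ + t) + 1) := step_aux (γ + t) γ v C₁ C₂ hγ ha hC₁ hC₂ hv0 hkey
        _ = v / (γ + ↑(t + 1)) := by push_cast; ring_nf
  intro t
  match t with
  | 0 =>
    push_cast
    rw [add_zero]
    calc Δ 0 ≤ v / (γ + 1) := h0
      _ ≤ v / γ := by gcongr; linarith
  | (t + 1) => exact key (t + 1) (Nat.succ_le_succ (Nat.zero_le t))
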